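/- (Theorem 1, integral characterization, Hopf–Lax form.) Let J be a nonempty compact interval of ℝ, and suppose u_T is left continuous, takes values in J, and satisfies the Oleinik condition (O) at T. Set y̌ := x̌ − T·f'(u_T(x̌)) and U_o^♯(x) := sup { U(x) : U ∈ II_T(U_T; J) }. For a bounded measurable function u_o : ℝ → ℝ with values in J, define U_o(x) := U_o^♭(y̌) + ∫_{y̌}^{x} u_o(ξ) dξ. Then S_T U_o = U_T if and only if for every y ∈ ℝ one has U_o^♭(y) − U_o^♭(y̌) ≤ ∫_{y̌}^{y} u_o(ξ) dξ ≤ U_o^♯(y) − U_o^♯(y̌). -/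

import Mathlib

open Filter MeasureTheory

/-- Condition (f): `f` is `C²`, strongly convex (`f'' > 0` everywhere), and
`f' → ∓∞` at `∓∞`. -/
def CondF (f : ℝ → ℝ) : Prop :=
  ContDiff ℝ 2 f ∧ (∀ x, 0 < deriv (deriv f) x) ∧
    Tendsto (deriv f) atBot atBot ∧ Tendsto (deriv f) atTop atTop

/-- The Legendre transform `f*(y) = sup_x (y·x − f(x))`. -/
noncomputable def legendre (f : ℝ → ℝ) (y : ℝ) : ℝ :=
  sSup (Set.range fun x => y * x - f x)

/-- `U_T(x) = ∫_{x̌}^x u_T`. -/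
noncomputable def UT (uT : ℝ → ℝ) (xc x : ℝ) : ℝ := ∫ ξ in xc..x, uT ξ

/-- `U_o^♭(x) = sup_ξ [U_T(ξ) − T f*((ξ−x)/T)]`. -/
noncomputable def Uflat (f : ℝ → ℝ) (T : ℝ) (uT : ℝ → ℝ) (xc x : ℝ) : ℝ :=
  sSup (Set.range fun ξ => UT uT xc ξ - T * legendre f ((ξ - x) / T))

/-- `M(x)`: the set of maximizers in the definition of `U_o^♭(x)`. -/
def MSet (f : ℝ → ℝ) (T : ℝ) (uT : ℝ → ℝ) (xc x : ℝ) : Set ℝ :=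
  {ξ | UT uT xc ξ = Uflat f T uT xc x + T * legendre f ((ξ - x) / T)}

/-- Oleinik condition (O) at `T`. -/
def Oleinik (f : ℝ → ℝ) (T : ℝ) (uT : ℝ → ℝ) : Prop :=
  ∀ x Δ : ℝ, 0 < Δ → deriv f (uT (x + Δ)) - deriv f (uT x) ≤ Δ / T

/-- The Hopf–Lax operator at time `T`: `(S_T U)(x) = inf_ξ [U(ξ) + T f*((x−ξ)/T)]`. -/
noncomputable def HopfLax (f : ℝ → ℝ) (T : ℝ) (U : ℝ → ℝ) (x : ℝ) : ℝ :=
  sInf (Set.range fun ξ => U ξ + T * legendre f ((x - ξ) / T))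

/-- Left continuity of a real function. -/
def LeftCts (u : ℝ → ℝ) : Prop :=
  ∀ x, Tendsto u (nhdsWithin x (Set.Iio x)) (nhds (u x))

/-- `II_T(U_T; J)`: Lipschitz functions with a.e. derivative in `J` evolving into `U_T`
under the Hopf–Lax semigroup. -/
def IIT (f : ℝ → ℝ) (T : ℝ) (uT : ℝ → ℝ) (xc : ℝ) (J : Set ℝ) : Set (ℝ → ℝ) :=
  {U | (∃ K, LipschitzWith K U) ∧ (∀ᵐ x ∂volume, deriv U x ∈ J) ∧
    ∀ x, HopfLax f T U x = UT uT xc x}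

/-- `U_o^♯(x) = sup { U(x) : U ∈ II_T(U_T; J) }`. -/
noncomputable def Usharp (f : ℝ → ℝ) (T : ℝ) (uT : ℝ → ℝ) (xc : ℝ) (J : Set ℝ) (x : ℝ) : ℝ :=
  sSup ((fun U : ℝ → ℝ => U x) '' IIT f T uT xc J)

noncomputable def ginv (f : ℝ → ℝ) : ℝ → ℝ := Function.invFun (deriv f)

section Ffacts
variable {f : ℝ → ℝ} (hf : CondF f)
include hf

lemma deriv_sm : StrictMono (deriv f) := strictMono_of_deriv_pos hf.2.1

lemma deriv_cont : Continuous (deriv f) := hf.1.continuous_deriv (by norm_num)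

lemma deriv_surj : Function.Surjective (deriv f) :=
  (deriv_cont hf).surjective hf.2.2.2 hf.2.2.1

lemma deriv_ginv (y : ℝ) : deriv f (ginv f y) = y :=
  Function.invFun_eq (deriv_surj hf y)

lemma ginv_deriv (x : ℝ) : ginv f (deriv f x) = x :=
  (deriv_sm hf).injective (by rw [deriv_ginv hf])

lemma ginv_mono : Monotone (ginv f) := by
  intro y y' h
  by_contra hc
  push_neg at hc
  have := (deriv_sm hf) hc
  rw [deriv_ginv hf, deriv_ginv hf] at this
  exact absurd h (not_le.mpr this)

lemma ginv_le_iff {y p : ℝ} : ginv f y ≤ p ↔ y ≤ deriv f p := by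
  constructor
  · intro h
    have := (deriv_sm hf).monotone h
    rwa [deriv_ginv hf] at this
  · intro h
    have := ginv_mono hf h
    rwa [ginv_deriv hf] at this

lemma le_ginv_iff {y p : ℝ} : p ≤ ginv f y ↔ deriv f p ≤ y := by
  constructor
  · intro h
    have := (deriv_sm hf).monotone h
    rwa [deriv_ginv hf] at this
  · intro h
    have := ginv_mono hf h
    rwa [ginv_deriv hf] at this

lemma ginv_continuous : Continuous (ginv f) := by
  let e := (deriv_sm hf).orderIsoOfSurjective _ (deriv_surj hf)
  have he : ginv f = ⇑e.symm := by
    funext y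
    refine (deriv_sm hf).injective ?_
    rw [deriv_ginv hf]
    have : (deriv f) (e.symm y) = e (e.symm y) := rfl
    rw [this, e.apply_symm_apply]
  rw [he]
  exact OrderIso.continuous _

lemma f_diff : Differentiable ℝ f := hf.1.differentiable (by norm_num)

lemma tangent_le (x z : ℝ) : f z + deriv f z * (x - z) ≤ f x := by
  rcases lt_trichotomy z x with h | h | h
  · obtain ⟨c, hc, hceq⟩ := exists_hasDerivAt_eq_slope f (deriv f) h
      (f_diff hf).continuous.continuousOn (fun t _ => ((f_diff hf) t).hasDerivAt)
    have h1 : deriv f z ≤ deriv f c := ((deriv_sm hf).monotone hc.1.le)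
    rw [eq_div_iff (by intro hq; apply absurd hq; intro hq; linarith [sub_eq_zero.mp hq] : x - z ≠ 0)] at hceq
    nlinarith
  · subst h; simp
  · obtain ⟨c, hc, hceq⟩ := exists_hasDerivAt_eq_slope f (deriv f) h
      (f_diff hf).continuous.continuousOn (fun t _ => ((f_diff hf) t).hasDerivAt)
    have h1 : deriv f c ≤ deriv f z := ((deriv_sm hf).monotone hc.2.le)
    rw [eq_div_iff (by intro hq; apply absurd hq; intro hq; linarith [sub_eq_zero.mp hq] : z - x ≠ 0)] at hceq
    nlinarith

lemma legendre_isGreatest (y : ℝ) :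
    IsGreatest (Set.range fun x => y * x - f x) (y * ginv f y - f (ginv f y)) := by
  constructor
  · exact ⟨ginv f y, rfl⟩
  · rintro _ ⟨x, rfl⟩
    have := tangent_le hf x (ginv f y)
    rw [deriv_ginv hf] at this
    show y * x - f x ≤ _
    nlinarith

lemma legendre_eq (y : ℝ) : legendre f y = y * ginv f y - f (ginv f y) :=
  (legendre_isGreatest hf y).csSup_eq

lemma fenchel (x y : ℝ) : y * x - f x ≤ legendre f y := by
  rw [legendre_eq hf]
  exact (legendre_isGreatest hf y).2 ⟨x, rfl⟩

lemma legendre_sub_ge (y y' : ℝ) : (y' - y) * ginv f y ≤ legendre f y' - legendre f y := by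
  have h1 := fenchel hf (ginv f y) y'
  rw [legendre_eq hf y]
  nlinarith [h1]

lemma legendre_hasDerivAt (y : ℝ) : HasDerivAt (legendre f) (ginv f y) y := by
  rw [hasDerivAt_iff_tendsto_slope]
  have key : ∀ z : ℝ, z ≠ y → |slope (legendre f) y z - ginv f y| ≤ |ginv f z - ginv f y| := by
    intro z hz
    have h1 := legendre_sub_ge hf y z
    have h2 := legendre_sub_ge hf z y
    rw [slope_def_field]
    rcases lt_or_gt_of_ne hz with h | h
    · -- z < y
      have hzy : z - y < 0 := by linarith
      have e1 : (legendre f z - legendre f y) / (z - y) ≤ ginv f y := by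
        rw [div_le_iff_of_neg hzy]; nlinarith [h1]
      have e2 : ginv f z ≤ (legendre f z - legendre f y) / (z - y) := by
        rw [le_div_iff_of_neg hzy]; nlinarith [h2]
      have hm : ginv f z ≤ ginv f y := ginv_mono hf h.le
      rw [abs_le]; rw [abs_of_nonpos (by linarith)]
      constructor <;> linarith
    · have hzy : 0 < z - y := by linarith
      have e1 : ginv f y ≤ (legendre f z - legendre f y) / (z - y) := by
        rw [le_div_iff₀ hzy]; nlinarith [h1]
      have e2 : (legendre f z - legendre f y) / (z - y) ≤ ginv f z := by
        rw [div_le_iff₀ hzy]; nlinarith [h2]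
      have hm : ginv f y ≤ ginv f z := ginv_mono hf h.le
      rw [abs_le]; rw [abs_of_nonneg (by linarith)]
      constructor <;> linarith
  rw [tendsto_iff_dist_tendsto_zero]
  apply squeeze_zero' (g := fun z => |ginv f z - ginv f y|)
  · exact Eventually.of_forall fun z => dist_nonneg
  · filter_upwards [self_mem_nhdsWithin] with z hz
    rw [Real.dist_eq]
    exact key z hz
  · have : Tendsto (fun z => |ginv f z - ginv f y|) (nhds y) (nhds 0) := by
      have h0 : Tendsto (fun z => ginv f z - ginv f y) (nhds y) (nhds 0) := by
        have := ((ginv_continuous hf).tendsto y).sub_const (ginv f y)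
        simpa using this
      simpa using h0.abs
    exact this.mono_left nhdsWithin_le_nhds

lemma legendre_continuous : Continuous (legendre f) := by
  have : ∀ y, ContinuousAt (legendre f) y := fun y => (legendre_hasDerivAt hf y).continuousAt
  exact continuous_iff_continuousAt.mpr this

end Ffacts
section C2
variable {f : ℝ → ℝ} (hf : CondF f) {T : ℝ} (hT : 0 < T)
include hf hT

lemma scaled_hasDerivAt (ξ s : ℝ) :
    HasDerivAt (fun s : ℝ => T * legendre f ((s - ξ) / T)) (ginv f ((s - ξ) / T)) s := by
  have h1 : HasDerivAt (fun s : ℝ => (s - ξ) / T) (1 / T) s := by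
    simpa using ((hasDerivAt_id s).sub_const ξ).div_const T
  have h2 := (legendre_hasDerivAt hf ((s - ξ) / T)).comp s h1
  have h3 := h2.const_mul T
  refine h3.congr_deriv ?_
  field_simp

lemma legendre_FTC (ξ x η : ℝ) :
    T * legendre f ((η - ξ) / T) - T * legendre f ((x - ξ) / T)
      = ∫ s in x..η, ginv f ((s - ξ) / T) := by
  rw [intervalIntegral.integral_eq_sub_of_hasDerivAt
    (fun s _ => scaled_hasDerivAt hf hT ξ s)
    (Continuous.intervalIntegrable ((ginv_continuous hf).comp (by continuity)) _ _)]

end C2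

section C3
variable {u : ℝ → ℝ} {a b : ℝ}

lemma bdd_ii (hu : Measurable u) (hbd : ∀ x, u x ∈ Set.Icc a b) (p q : ℝ) :
    IntervalIntegrable u volume p q := by
  have key : ∀ p q : ℝ, IntegrableOn u (Set.Ioc p q) volume := by
    intro p q
    apply Integrable.mono' (integrable_const (max |a| |b|))
      (hu.aestronglyMeasurable.restrict)
    refine Eventually.of_forall fun x => ?_
    rcases hbd x with ⟨h1, h2⟩
    rw [Real.norm_eq_abs, abs_le]
    constructor
    · have : -(max |a| |b|) ≤ -|a| := by simp [neg_le_neg_iff]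
      have h3 : -|a| ≤ a := neg_abs_le a
      linarith
    · have h3 : b ≤ |b| := le_abs_self b
      have : |b| ≤ max |a| |b| := le_max_right _ _
      linarith
  exact ⟨key _ _, key _ _⟩

end C3

section C4
variable {f uT : ℝ → ℝ} {T xc a b : ℝ}

lemma UT_sub (huT : Measurable uT) (hbd : ∀ x, uT x ∈ Set.Icc a b) (x y : ℝ) :
    UT uT xc y - UT uT xc x = ∫ s in x..y, uT s :=
  intervalIntegral.integral_interval_sub_left (bdd_ii huT hbd xc y) (bdd_ii huT hbd xc x)

lemma UT_bounds (huT : Measurable uT) (hbd : ∀ x, uT x ∈ Set.Icc a b) {x y : ℝ} (hxy : x ≤ y) :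
    a * (y - x) ≤ UT uT xc y - UT uT xc x ∧ UT uT xc y - UT uT xc x ≤ b * (y - x) := by
  rw [UT_sub huT hbd (xc := xc)]
  constructor
  · have h := intervalIntegral.integral_mono_on hxy
      (intervalIntegrable_const (c := a)) (bdd_ii huT hbd x y)
      (fun s _ => (hbd s).1)
    simpa [mul_comm] using h
  · have h := intervalIntegral.integral_mono_on hxy
      (bdd_ii huT hbd x y) (intervalIntegrable_const (c := b))
      (fun s _ => (hbd s).2)
    simpa [mul_comm] using h

end C4

section C5
variable {f uT : ℝ → ℝ} {T : ℝ}

lemma ole_right (hf : CondF f) (hT : 0 < T) (hO : Oleinik f T uT) {x s : ℝ} (h : x < s) :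
    uT s ≤ ginv f (deriv f (uT x) + (s - x) / T) := by
  have h1 := hO x (s - x) (by linarith)
  rw [add_sub_cancel] at h1
  rw [le_ginv_iff hf]
  linarith

lemma ole_left (hf : CondF f) (hT : 0 < T) (hO : Oleinik f T uT) {x s : ℝ} (h : s < x) :
    ginv f (deriv f (uT x) - (x - s) / T) ≤ uT s := by
  have h1 := hO s (x - s) (by linarith)
  rw [add_sub_cancel] at h1
  rw [ginv_le_iff hf]
  linarith

end C5
section C6
variable {f uT : ℝ → ℝ} {T xc a b : ℝ}

/-- The characteristic foot point `ξ(x) = x - T f'(u_T(x))`. -/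
noncomputable def footpt (f : ℝ → ℝ) (T : ℝ) (uT : ℝ → ℝ) (x : ℝ) : ℝ :=
  x - T * deriv f (uT x)

lemma foot_arg (hT : 0 < T) (x s : ℝ) :
    (s - footpt f T uT x) / T = deriv f (uT x) + (s - x) / T := by
  unfold footpt; field_simp; ring

lemma ginv_aff_cont (hf : CondF f) (c d : ℝ) :
    Continuous fun s : ℝ => ginv f ((s - c) / d) :=
  (ginv_continuous hf).comp (by continuity)

lemma key_max (hf : CondF f) (hT : 0 < T) (hO : Oleinik f T uT)
    (huT : Measurable uT) (hbd : ∀ x, uT x ∈ Set.Icc a b) (x η : ℝ) :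
    UT uT xc η - T * legendre f ((η - footpt f T uT x) / T)
      ≤ UT uT xc x - T * legendre f ((x - footpt f T uT x) / T) := by
  have hint : UT uT xc η - UT uT xc x = ∫ s in x..η, uT s := UT_sub huT hbd x η
  have hleg := legendre_FTC hf hT (footpt f T uT x) x η
  have hgoal : (∫ s in x..η, uT s) ≤ ∫ s in x..η, ginv f ((s - footpt f T uT x) / T) := by
    rcases le_total x η with hxe | hxe
    · apply intervalIntegral.integral_mono_on hxe (bdd_ii huT hbd x η)
        ((ginv_aff_cont hf (footpt f T uT x) T).intervalIntegrable _ _)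
      intro s hs
      rcases eq_or_lt_of_le hs.1 with he | hlt
      · subst he
        rw [foot_arg hT]
        simp [ginv_deriv hf]
      · rw [foot_arg hT]
        have := ole_right hf hT hO hlt
        simpa using this
    · have H : (∫ s in η..x, ginv f ((s - footpt f T uT x) / T)) ≤ ∫ s in η..x, uT s := by
        apply intervalIntegral.integral_mono_on hxe
          ((ginv_aff_cont hf (footpt f T uT x) T).intervalIntegrable _ _)
          (bdd_ii huT hbd η x)
        intro s hs
        rcases eq_or_lt_of_le hs.2 with he | hlt
        · subst he
          rw [foot_arg hT]
          simp [ginv_deriv hf]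
        · rw [foot_arg hT]
          have := ole_left hf hT hO hlt
          have harg : deriv f (uT x) - (x - s) / T = deriv f (uT x) + (s - x) / T := by ring
          rwa [harg] at this
      rw [show (∫ s in x..η, uT s) = -∫ s in η..x, uT s from intervalIntegral.integral_symm η x,
        show (∫ s in x..η, ginv f ((s - footpt f T uT x) / T))
            = -∫ s in η..x, ginv f ((s - footpt f T uT x) / T) from
          intervalIntegral.integral_symm η x]
      exact neg_le_neg H
  linarith

lemma Uflat_pinned (hf : CondF f) (hT : 0 < T) (hO : Oleinik f T uT)
    (huT : Measurable uT) (hbd : ∀ x, uT x ∈ Set.Icc a b) (x : ℝ) :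
    Uflat f T uT xc (footpt f T uT x)
      = UT uT xc x - T * legendre f ((x - footpt f T uT x) / T) := by
  apply IsGreatest.csSup_eq
  constructor
  · exact ⟨x, rfl⟩
  · rintro _ ⟨η, rfl⟩
    exact key_max hf hT hO huT hbd x η

lemma foot_self_arg (hT : 0 < T) (x : ℝ) :
    (x - footpt f T uT x) / T = deriv f (uT x) := by
  unfold footpt; field_simp; ring

/-- Upper bound for the functions appearing in `Uflat`. -/
lemma flat_ub (hf : CondF f) (hT : 0 < T) (huT : Measurable uT)
    (hbd : ∀ x, uT x ∈ Set.Icc a b) (y η : ℝ) :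
    UT uT xc η - T * legendre f ((η - y) / T)
      ≤ UT uT xc y + T * max (f (max |a| |b| + 1)) (f (-(max |a| |b| + 1))) := by
  set L := max |a| |b| with hL
  have hL0 : 0 ≤ L := le_trans (abs_nonneg a) (le_max_left _ _)
  have haL : -L ≤ a ∧ a ≤ L := abs_le.mp (le_max_left |a| |b|)
  have hbL : -L ≤ b ∧ b ≤ L := abs_le.mp (le_max_right |a| |b|)
  have hfen : ∀ N : ℝ, (η - y) * N - T * f N ≤ T * legendre f ((η - y) / T) := by
    intro N
    have := fenchel hf N ((η - y) / T)
    have h2 : T * ((η - y) / T * N - f N) ≤ T * legendre f ((η - y) / T) :=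
      mul_le_mul_of_nonneg_left this hT.le
    calc (η - y) * N - T * f N = T * ((η - y) / T * N - f N) := by field_simp
    _ ≤ _ := h2
  rcases le_total y η with hc | hc
  · have h1 := (UT_bounds (xc := xc) huT hbd hc).2
    have h2 := hfen (L + 1)
    have h3 : T * f (L + 1) ≤ T * max (f (L + 1)) (f (-(L + 1))) :=
      mul_le_mul_of_nonneg_left (le_max_left _ _) hT.le
    nlinarith [h1, h2]
  · have h1 := (UT_bounds (xc := xc) huT hbd hc).1
    have h2 := hfen (-(L + 1))
    have h3 : T * f (-(L + 1)) ≤ T * max (f (L + 1)) (f (-(L + 1))) :=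
      mul_le_mul_of_nonneg_left (le_max_right _ _) hT.le
    nlinarith [h1, h2]

lemma flat_bddAbove (hf : CondF f) (hT : 0 < T) (huT : Measurable uT)
    (hbd : ∀ x, uT x ∈ Set.Icc a b) (y : ℝ) :
    BddAbove (Set.range fun ξ => UT uT xc ξ - T * legendre f ((ξ - y) / T)) := by
  refine ⟨UT uT xc y + T * max (f (max |a| |b| + 1)) (f (-(max |a| |b| + 1))), ?_⟩
  rintro _ ⟨η, rfl⟩
  exact flat_ub hf hT huT hbd y η

lemma le_Uflat (hf : CondF f) (hT : 0 < T) (huT : Measurable uT)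
    (hbd : ∀ x, uT x ∈ Set.Icc a b) (y η : ℝ) :
    UT uT xc η - T * legendre f ((η - y) / T) ≤ Uflat f T uT xc y :=
  le_csSup (flat_bddAbove hf hT huT hbd y) ⟨η, rfl⟩

/-- Lower bound for HopfLax elements, for a `C`-Lipschitz function `U`. -/
lemma hopflax_elt_lb (hf : CondF f) (hT : 0 < T) {U : ℝ → ℝ} {C : ℝ} (hC : 0 ≤ C)
    (hLip : ∀ p q, |U p - U q| ≤ C * |p - q|) (x ξ : ℝ) :
    U x + |x - ξ| - T * max (f (C + 1)) (f (-(C + 1)))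
      ≤ U ξ + T * legendre f ((x - ξ) / T) := by
  have hfen : ∀ N : ℝ, (x - ξ) * N - T * f N ≤ T * legendre f ((x - ξ) / T) := by
    intro N
    have := fenchel hf N ((x - ξ) / T)
    have h2 : T * ((x - ξ) / T * N - f N) ≤ T * legendre f ((x - ξ) / T) :=
      mul_le_mul_of_nonneg_left this hT.le
    calc (x - ξ) * N - T * f N = T * ((x - ξ) / T * N - f N) := by field_simp
    _ ≤ _ := h2
  have hl := hLip x ξ
  rcases le_total ξ x with hc | hc
  · have h2 := hfen (C + 1)
    have h3 : T * f (C + 1) ≤ T * max (f (C + 1)) (f (-(C + 1))) :=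
      mul_le_mul_of_nonneg_left (le_max_left _ _) hT.le
    rw [abs_of_nonneg (by linarith : (0:ℝ) ≤ x - ξ)] at hl ⊢
    rw [abs_le] at hl
    nlinarith
  · have h2 := hfen (-(C + 1))
    have h3 : T * f (-(C + 1)) ≤ T * max (f (C + 1)) (f (-(C + 1))) :=
      mul_le_mul_of_nonneg_left (le_max_right _ _) hT.le
    rw [abs_of_nonpos (by linarith : x - ξ ≤ 0)] at hl ⊢
    rw [abs_le] at hl
    nlinarith

lemma hopflax_bddBelow (hf : CondF f) (hT : 0 < T) {U : ℝ → ℝ} {C : ℝ} (hC : 0 ≤ C)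
    (hLip : ∀ p q, |U p - U q| ≤ C * |p - q|) (x : ℝ) :
    BddBelow (Set.range fun ξ => U ξ + T * legendre f ((x - ξ) / T)) := by
  refine ⟨U x - T * max (f (C + 1)) (f (-(C + 1))), ?_⟩
  rintro _ ⟨ξ, rfl⟩
  have := hopflax_elt_lb hf hT hC hLip x ξ
  have h0 : 0 ≤ |x - ξ| := abs_nonneg _
  linarith

/-- difference quotients of `Uflat` lie in `[a,b]`. -/
lemma Uflat_quot (hf : CondF f) (hT : 0 < T) (huT : Measurable uT)
    (hbd : ∀ x, uT x ∈ Set.Icc a b) {y y' : ℝ} (h : y ≤ y') :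
    a * (y' - y) ≤ Uflat f T uT xc y' - Uflat f T uT xc y ∧
      Uflat f T uT xc y' - Uflat f T uT xc y ≤ b * (y' - y) := by
  constructor
  · have key : Uflat f T uT xc y ≤ Uflat f T uT xc y' - a * (y' - y) := by
      apply csSup_le (Set.range_nonempty _)
      rintro _ ⟨η, rfl⟩
      have h1 := (UT_bounds (xc := xc) huT hbd (x := η) (y := η + (y' - y)) (by linarith)).1
      rw [show η + (y' - y) - η = y' - y by ring] at h1
      have h2 : UT uT xc (η + (y' - y)) - T * legendre f ((η + (y' - y) - y') / T)
          ≤ Uflat f T uT xc y' := le_Uflat hf hT huT hbd y' (η + (y' - y))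
      have harg : (η + (y' - y) - y') = η - y := by ring
      rw [harg] at h2
      linarith
    linarith
  · have key : Uflat f T uT xc y' ≤ Uflat f T uT xc y + b * (y' - y) := by
      apply csSup_le (Set.range_nonempty _)
      rintro _ ⟨η, rfl⟩
      have h1 : UT uT xc η - UT uT xc (η - (y' - y)) ≤ b * (y' - y) := by
        have := (UT_bounds (xc := xc) huT hbd (by linarith : η - (y' - y) ≤ η)).2
        have harg : η - (η - (y' - y)) = y' - y := by ring
        rwa [harg] at this
      have h2 : UT uT xc (η - (y' - y)) - T * legendre f ((η - (y' - y) - y) / T)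
          ≤ Uflat f T uT xc y := le_Uflat hf hT huT hbd y (η - (y' - y))
      have harg : (η - (y' - y) - y) = η - y' := by ring
      rw [harg] at h2
      linarith
    linarith

end C6
section C7

lemma quot_lip {U : ℝ → ℝ} {a b : ℝ}
    (hq : ∀ y y', y ≤ y' → a * (y' - y) ≤ U y' - U y ∧ U y' - U y ≤ b * (y' - y))
    (p q : ℝ) : |U p - U q| ≤ max |a| |b| * |p - q| := by
  have haL : -(max |a| |b|) ≤ a ∧ a ≤ max |a| |b| := abs_le.mp (le_max_left |a| |b|)
  have hbL : -(max |a| |b|) ≤ b ∧ b ≤ max |a| |b| := abs_le.mp (le_max_right |a| |b|)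
  rcases le_total q p with h | h
  · rcases hq q p h with ⟨h1, h2⟩
    rw [abs_of_nonneg (by linarith : (0:ℝ) ≤ p - q), abs_le]
    constructor <;> nlinarith
  · rcases hq p q h with ⟨h1, h2⟩
    rw [abs_sub_comm, abs_of_nonpos (by linarith : p - q ≤ 0), abs_le]
    constructor <;> nlinarith

lemma quot_lipschitzWith {U : ℝ → ℝ} {a b : ℝ}
    (hq : ∀ y y', y ≤ y' → a * (y' - y) ≤ U y' - U y ∧ U y' - U y ≤ b * (y' - y)) :
    LipschitzWith (Real.toNNReal (max |a| |b|)) U := by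
  rw [lipschitzWith_iff_dist_le_mul]
  intro x y
  rw [Real.dist_eq, Real.dist_eq,
    Real.coe_toNNReal _ (le_trans (abs_nonneg a) (le_max_left _ _))]
  exact quot_lip hq x y

lemma seq_to_right (x : ℝ) :
    Tendsto (fun n : ℕ => x + 1 / (n + 1)) atTop (nhdsWithin x {x}ᶜ) := by
  rw [tendsto_nhdsWithin_iff]
  constructor
  · have := tendsto_one_div_add_atTop_nhds_zero_nat (𝕜 := ℝ)
    have h2 := tendsto_const_nhds (x := x) (f := atTop (α := ℕ)) |>.add this
    simpa using h2
  · refine Eventually.of_forall fun n => ?_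
    have : (0:ℝ) < 1 / (n + 1) := by positivity
    simp only [Set.mem_compl_iff, Set.mem_singleton_iff]
    intro hc
    nlinarith [hc]

lemma quot_deriv_mem {U : ℝ → ℝ} {a b : ℝ}
    (hq : ∀ y y', y ≤ y' → a * (y' - y) ≤ U y' - U y ∧ U y' - U y ≤ b * (y' - y)) :
    ∀ᵐ x ∂(volume : Measure ℝ), deriv U x ∈ Set.Icc a b := by
  filter_upwards [(quot_lipschitzWith hq).ae_differentiableAt] with x hx
  have hd : HasDerivAt U (deriv U x) x := hx.hasDerivAt
  have hslope := hasDerivAt_iff_tendsto_slope.mp hd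
  have hcomp := hslope.comp (seq_to_right x)
  refine isClosed_Icc.mem_of_tendsto hcomp (Eventually.of_forall fun n => ?_)
  have hpos : (0:ℝ) < 1 / (n + 1) := by positivity
  have harg : x + 1 / (n + 1) - x = 1 / (n + 1) := by ring
  rcases hq x (x + 1 / (n + 1)) (by linarith) with ⟨h1, h2⟩
  rw [harg] at h1 h2
  show slope U x (x + 1 / ((n:ℝ) + 1)) ∈ Set.Icc a b
  rw [slope_def_field, harg]
  constructor
  · rw [le_div_iff₀ hpos]; linarith
  · rw [div_le_iff₀ hpos]; linarith

lemma lip_ftc {U : ℝ → ℝ} {C : ℝ} (hC : 0 ≤ C)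
    (hL : ∀ p q : ℝ, |U p - U q| ≤ C * |p - q|) (y y' : ℝ) :
    U y' - U y = ∫ s in y..y', deriv U s := by
  have hKW : LipschitzWith (Real.toNNReal C) U := by
    rw [lipschitzWith_iff_dist_le_mul]
    intro p q
    rw [Real.dist_eq, Real.dist_eq, Real.coe_toNNReal _ hC]
    exact hL p q
  have hUcont : Continuous U := hKW.continuous
  set hn : ℕ → ℝ := fun n => 1 / (n + 1) with hhn
  have hnpos : ∀ n, (0:ℝ) < hn n := fun n => by positivity
  have hn0 : Tendsto hn atTop (nhds 0) := tendsto_one_div_add_atTop_nhds_zero_nat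
  -- endpoint limits
  have endpt : ∀ c : ℝ, Tendsto (fun n => (∫ s in c..(c + hn n), U s) / hn n)
      atTop (nhds (U c)) := by
    intro c
    rw [tendsto_iff_dist_tendsto_zero]
    apply squeeze_zero' (g := fun n => C * hn n)
      (Eventually.of_forall fun n => dist_nonneg)
    · refine Eventually.of_forall fun n => ?_
      have hb : ∀ s ∈ Set.uIoc c (c + hn n), ‖U s - U c‖ ≤ C * hn n := by
        intro s hs
        rw [Set.uIoc_of_le (by linarith [hnpos n])] at hs
        have h1 : |s - c| ≤ hn n := by
          rw [abs_le]; constructor <;> nlinarith [hs.1, hs.2, hnpos n]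
        calc ‖U s - U c‖ ≤ C * |s - c| := hL s c
        _ ≤ C * hn n := by nlinarith
      have h2 := intervalIntegral.norm_integral_le_of_norm_le_const hb
      have h3 : (∫ s in c..(c + hn n), (U s - U c))
          = (∫ s in c..(c + hn n), U s) - hn n * U c := by
        rw [intervalIntegral.integral_sub (hUcont.intervalIntegrable _ _)
          (intervalIntegrable_const)]
        simp [smul_eq_mul]
      rw [h3] at h2
      have h4 : |c + hn n - c| = hn n := by
        rw [show c + hn n - c = hn n by ring, abs_of_pos (hnpos n)]
      rw [h4] at h2
      rw [Real.dist_eq]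
      have h5 : (∫ s in c..(c + hn n), U s) / hn n - U c
          = ((∫ s in c..(c + hn n), U s) - hn n * U c) / hn n := by
        rw [sub_div, mul_div_cancel_left₀ _ (hnpos n).ne']
      rw [h5, abs_div, abs_of_pos (hnpos n), div_le_iff₀ (hnpos n)]
      calc |(∫ s in c..(c + hn n), U s) - hn n * U c| ≤ C * hn n * hn n := by
            simpa using h2
      _ = C * hn n * hn n := rfl
    · have h := hn0.const_mul C
      rwa [mul_zero] at h
  -- integral identity
  have iden : ∀ n, (∫ s in y..y', (U (s + hn n) - U s) / hn n)
      = ((∫ s in y'..(y' + hn n), U s) - ∫ s in y..(y + hn n), U s) / hn n := by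
    intro n
    rw [intervalIntegral.integral_div]
    congr 1
    rw [intervalIntegral.integral_sub
      ((show Continuous fun s : ℝ => U (s + hn n) from hUcont.comp (by continuity)).intervalIntegrable _ _)
      (hUcont.intervalIntegrable _ _)]
    have e0 : (∫ s in y..y', U (s + hn n)) = ∫ s in (y + hn n)..(y' + hn n), U s :=
      intervalIntegral.integral_comp_add_right U (hn n)
    have e1 : (∫ s in y..(y + hn n), U s) + (∫ s in (y + hn n)..(y' + hn n), U s)
        = ∫ s in y..(y' + hn n), U s :=
      intervalIntegral.integral_add_adjacent_intervals
        (hUcont.intervalIntegrable _ _) (hUcont.intervalIntegrable _ _)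
    have e2 : (∫ s in y..y', U s) + (∫ s in y'..(y' + hn n), U s)
        = ∫ s in y..(y' + hn n), U s :=
      intervalIntegral.integral_add_adjacent_intervals
        (hUcont.intervalIntegrable _ _) (hUcont.intervalIntegrable _ _)
    rw [e0]
    linarith
  -- DCT
  have hDCT : Tendsto (fun n => ∫ s in y..y', (U (s + hn n) - U s) / hn n) atTop
      (nhds (∫ s in y..y', deriv U s)) := by
    apply intervalIntegral.tendsto_integral_filter_of_dominated_convergence
      (bound := fun _ => C)
    · refine Eventually.of_forall fun n => ?_
      exact (Continuous.aestronglyMeasurable (by continuity)).restrict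
    · refine Eventually.of_forall fun n => Eventually.of_forall fun s _ => ?_
      have h1 := hL (s + hn n) s
      have h2 : |s + hn n - s| = hn n := by
        rw [show s + hn n - s = hn n by ring, abs_of_pos (hnpos n)]
      rw [h2] at h1
      rw [Real.norm_eq_abs, abs_div, abs_of_pos (hnpos n), div_le_iff₀ (hnpos n)]
      exact h1
    · exact intervalIntegrable_const
    · have hae := hKW.ae_differentiableAt (μ := (volume : Measure ℝ))
      have hae' : ∀ᵐ s ∂(volume : Measure ℝ),
          Tendsto (fun n => (U (s + hn n) - U s) / hn n) atTop (nhds (deriv U s)) := by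
        filter_upwards [hae] with s hs
        have hd : HasDerivAt U (deriv U s) s := hs.hasDerivAt
        have hslope := hasDerivAt_iff_tendsto_slope.mp hd
        have hcomp := hslope.comp (seq_to_right s)
        have heq : ∀ n : ℕ, slope U s (s + hn n) = (U (s + hn n) - U s) / hn n := by
          intro n
          rw [slope_def_field, show s + hn n - s = hn n by ring]
        have hcomp' : Tendsto (fun n : ℕ => slope U s (s + hn n)) atTop
            (nhds (deriv U s)) := hcomp
        have : (fun n : ℕ => slope U s (s + hn n))
            = fun n => (U (s + hn n) - U s) / hn n := funext heq
        rwa [this] at hcomp'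
      exact hae'.mono fun s h _ => h
  -- combine
  have hlim2 : Tendsto (fun n => ∫ s in y..y', (U (s + hn n) - U s) / hn n) atTop
      (nhds (U y' - U y)) := by
    have := (endpt y').sub (endpt y)
    have heq : (fun n => (∫ s in y'..(y' + hn n), U s) / hn n
        - (∫ s in y..(y + hn n), U s) / hn n)
        = fun n => ∫ s in y..y', (U (s + hn n) - U s) / hn n := by
      funext n
      rw [iden n, sub_div]
    rwa [heq] at this
  exact tendsto_nhds_unique hlim2 hDCT

end C7
section C8

lemma bdd_ii_ae {u : ℝ → ℝ} {a b : ℝ} (hu : Measurable u)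
    (hbd : ∀ᵐ x ∂(volume : Measure ℝ), u x ∈ Set.Icc a b) (p q : ℝ) :
    IntervalIntegrable u volume p q := by
  have key : ∀ p q : ℝ, IntegrableOn u (Set.Ioc p q) volume := by
    intro p q
    apply Integrable.mono' (integrable_const (max |a| |b|))
      (hu.aestronglyMeasurable.restrict)
    apply ae_restrict_of_ae
    filter_upwards [hbd] with x hx
    rcases hx with ⟨h1, h2⟩
    rw [Real.norm_eq_abs, abs_le]
    have e1 : -(max |a| |b|) ≤ a ∧ a ≤ max |a| |b| := abs_le.mp (le_max_left |a| |b|)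
    have e2 : -(max |a| |b|) ≤ b ∧ b ≤ max |a| |b| := abs_le.mp (le_max_right |a| |b|)
    constructor <;> linarith [e1.1, e2.2]
  exact ⟨key _ _, key _ _⟩

lemma IIT_quot {a b : ℝ} {U : ℝ → ℝ}
    (hLipEx : ∃ K, LipschitzWith K U)
    (hd : ∀ᵐ x ∂(volume : Measure ℝ), deriv U x ∈ Set.Icc a b) :
    ∀ y y', y ≤ y' → a * (y' - y) ≤ U y' - U y ∧ U y' - U y ≤ b * (y' - y) := by
  obtain ⟨K, hK⟩ := hLipEx
  have hL : ∀ p q : ℝ, |U p - U q| ≤ (K : ℝ) * |p - q| := by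
    intro p q
    have := lipschitzWith_iff_dist_le_mul.mp hK p q
    rwa [Real.dist_eq, Real.dist_eq] at this
  intro y y' h
  have hftc := lip_ftc (K.coe_nonneg) hL y y'
  have hint : IntervalIntegrable (deriv U) volume y y' :=
    bdd_ii_ae (measurable_deriv U) hd y y'
  constructor
  · have := intervalIntegral.integral_mono_ae_restrict h
      (intervalIntegrable_const (c := a)) hint
      (ae_restrict_of_ae (hd.mono fun x hx => hx.1))
    rw [← hftc] at this
    simpa [mul_comm] using this
  · have := intervalIntegral.integral_mono_ae_restrict h hint
      (intervalIntegrable_const (c := b))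
      (ae_restrict_of_ae (hd.mono fun x hx => hx.2))
    rw [← hftc] at this
    simpa [mul_comm] using this

variable {f : ℝ → ℝ} {T : ℝ}

lemma hopflax_min (hf : CondF f) (hT : 0 < T) {U : ℝ → ℝ} {C : ℝ} (hC : 0 ≤ C)
    (hLip : ∀ p q : ℝ, |U p - U q| ≤ C * |p - q|) (x : ℝ) :
    ∃ ξ, ∀ ζ, U ξ + T * legendre f ((x - ξ) / T) ≤ U ζ + T * legendre f ((x - ζ) / T) := by
  have hUcont : Continuous U := by
    have hKW : LipschitzWith (Real.toNNReal C) U := by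
      rw [lipschitzWith_iff_dist_le_mul]
      intro p q
      rw [Real.dist_eq, Real.dist_eq, Real.coe_toNNReal _ hC]
      exact hLip p q
    exact hKW.continuous
  set Φ : ℝ → ℝ := fun ξ => U ξ + T * legendre f ((x - ξ) / T) with hΦ
  have hΦc : Continuous Φ := by
    apply hUcont.add
    exact continuous_const.mul ((legendre_continuous hf).comp (by continuity))
  set M := T * max (f (C + 1)) (f (-(C + 1))) with hM
  have hlb : ∀ ξ, U x + |x - ξ| - M ≤ Φ ξ := fun ξ => hopflax_elt_lb hf hT hC hLip x ξ
  set R : ℝ := max (M + T * legendre f 0) 0 + 1 with hR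
  have hR1 : (0:ℝ) < R := by positivity
  obtain ⟨ξ, hmem, hmin⟩ := (isCompact_Icc (a := x - R) (b := x + R)).exists_isMinOn
    ⟨x, by constructor <;> linarith⟩ hΦc.continuousOn
  refine ⟨ξ, fun ζ => ?_⟩
  by_cases hζ : ζ ∈ Set.Icc (x - R) (x + R)
  · exact isMinOn_iff.mp hmin ζ hζ
  · have hfar : R < |x - ζ| := by
      have hcase : ζ < x - R ∨ x + R < ζ := by
        by_contra hc
        push_neg at hc
        exact hζ (Set.mem_Icc.mpr ⟨hc.1, hc.2⟩)
      rcases hcase with h | h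
      · rw [abs_of_pos (by linarith)]
        linarith
      · rw [abs_of_neg (by linarith)]
        linarith
    have hΦx : Φ x = U x + T * legendre f 0 := by
      rw [hΦ]
      simp
    have h1 : Φ x < Φ ζ := by
      have h2 := hlb ζ
      have h3 : M + T * legendre f 0 ≤ max (M + T * legendre f 0) 0 := le_max_left _ _
      rw [hΦx]
      linarith
    exact le_of_lt (lt_of_le_of_lt (isMinOn_iff.mp hmin x ⟨by linarith, by linarith⟩) h1)

lemma cont_le_of_int_le {φ ψ : ℝ → ℝ} {c d : ℝ} (hcd : c < d)
    (hφ : Continuous φ) (hψ : Continuous ψ)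
    (h : ∀ η, c < η → η ≤ d → (∫ s in c..η, φ s) ≤ ∫ s in c..η, ψ s) :
    φ c ≤ ψ c := by
  by_contra hcon
  push_neg at hcon
  set ε := φ c - ψ c with hε
  have hεpos : 0 < ε := by simp [hε]; linarith
  have hev : ∀ᶠ s in nhds c, ε / 2 < φ s - ψ s :=
    ((hφ.sub hψ).tendsto c).eventually (eventually_gt_nhds (by show ε / 2 < φ c - ψ c; linarith))
  obtain ⟨δ, hδpos, hδ⟩ := Metric.eventually_nhds_iff.mp hev
  set η := min d (c + δ / 2) with hη
  have hcη : c < η := lt_min hcd (by linarith)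
  have hηd : η ≤ d := min_le_left _ _
  have hint := h η hcη hηd
  have hmono : (∫ s in c..η, (ψ s + ε / 2)) ≤ ∫ s in c..η, φ s := by
    apply intervalIntegral.integral_mono_on hcη.le
      ((hψ.add continuous_const).intervalIntegrable _ _)
      (hφ.intervalIntegrable _ _)
    intro s hs
    have hd1 : dist s c < δ := by
      rw [Real.dist_eq, abs_of_nonneg (by linarith [hs.1])]
      have := hs.2
      have h2 : η ≤ c + δ / 2 := min_le_right _ _
      linarith
    have := hδ hd1
    show ψ s + ε / 2 ≤ φ s
    linarith
  have hconst : (∫ s in c..η, (ψ s + ε / 2))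
      = (∫ s in c..η, ψ s) + (η - c) * (ε / 2) := by
    rw [intervalIntegral.integral_add (hψ.intervalIntegrable _ _) intervalIntegrable_const]
    simp [smul_eq_mul]
    rw [hε]
    ring
  rw [hconst] at hmono
  nlinarith [hmono, hint]

end C8
section C9
variable {f uT : ℝ → ℝ} {T a b : ℝ}

lemma min_lb (hf : CondF f) (hT : 0 < T) (hlc : LeftCts uT)
    (huT : Measurable uT) (hbd : ∀ x, uT x ∈ Set.Icc a b) {z ξs : ℝ}
    (hκ : ∀ η, η < z → (∫ s in η..z, ginv f ((s - ξs) / T)) ≤ ∫ s in η..z, uT s) :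
    ginv f ((z - ξs) / T) ≤ uT z := by
  by_contra hcon
  push_neg at hcon
  set ψ : ℝ → ℝ := fun s => ginv f ((s - ξs) / T) with hψ
  have hψc : Continuous ψ := ginv_aff_cont hf ξs T
  set ε := ψ z - uT z with hε
  have hεpos : 0 < ε := by simp only [hε]; linarith
  have hev1 : ∀ᶠ s in nhds z, ψ z - ε / 4 < ψ s :=
    (hψc.tendsto z).eventually (eventually_gt_nhds (by linarith))
  have hev2 : ∀ᶠ s in nhdsWithin z (Set.Iio z), uT s < uT z + ε / 4 :=
    (hlc z).eventually (eventually_lt_nhds (by linarith))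
  have hev : ∀ᶠ s in nhds z, s ∈ Set.Iio z → (ψ z - ε / 4 < ψ s ∧ uT s < uT z + ε / 4) := by
    have h2 := eventually_nhdsWithin_iff.mp hev2
    filter_upwards [hev1, h2] with s h1 h2' hs
    exact ⟨h1, h2' hs⟩
  obtain ⟨δ, hδpos, hδ⟩ := Metric.eventually_nhds_iff.mp hev
  set η := z - δ / 2 with hη
  have hηz : η < z := by simp only [hη]; linarith
  have hbound : ∀ s, η < s → s < z → uT s ≤ ψ s - ε / 2 := by
    intro s h1 h2
    have hd : dist s z < δ := by
      rw [Real.dist_eq, abs_of_nonpos (by linarith)]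
      simp only [hη] at h1
      linarith
    obtain ⟨e1, e2⟩ := hδ hd h2
    simp only [hε] at e1 e2 ⊢
    linarith
  have h1 : (∫ s in η..z, uT s) ≤ ∫ s in η..z, (ψ s - ε / 2) := by
    apply intervalIntegral.integral_mono_ae_restrict hηz.le (bdd_ii huT hbd η z)
      ((hψc.sub continuous_const).intervalIntegrable _ _)
    refine (ae_restrict_iff' measurableSet_Icc).mpr ?_
    have hnull : (volume : Measure ℝ) ({η, z} : Set ℝ) = 0 :=
      (Set.toFinite _).measure_zero volume
    filter_upwards [measure_eq_zero_iff_ae_notMem.mp hnull] with s hs hsIcc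
    have hs1 : s ≠ η ∧ s ≠ z := by
      constructor <;> intro hc <;> subst hc <;> simp at hs
    exact hbound s (lt_of_le_of_ne hsIcc.1 (Ne.symm hs1.1)) (lt_of_le_of_ne hsIcc.2 hs1.2)
  have h2 : (∫ s in η..z, (ψ s - ε / 2)) = (∫ s in η..z, ψ s) - (z - η) * (ε / 2) := by
    rw [intervalIntegral.integral_sub (hψc.intervalIntegrable _ _) intervalIntegrable_const]
    simp [smul_eq_mul]
    rw [hε]
    ring
  have h3 := hκ η hηz
  rw [h2] at h1
  have h4 : 0 < (z - η) * (ε / 2) := by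
    apply mul_pos (by linarith) (by linarith)
  simp only [hψ] at h3 h1
  linarith

lemma min_ub (hf : CondF f) (hT : 0 < T) (hO : Oleinik f T uT)
    (huT : Measurable uT) (hbd : ∀ x, uT x ∈ Set.Icc a b) {x z ξs : ℝ} (hzx : z < x)
    (hκ : ∀ η, z < η → η ≤ x → (∫ s in z..η, uT s) ≤ ∫ s in z..η, ginv f ((s - ξs) / T)) :
    ξs ≤ x - T * deriv f (uT x) := by
  set φ : ℝ → ℝ := fun s => ginv f (deriv f (uT x) - (x - s) / T) with hφ
  have hφc : Continuous φ := (ginv_continuous hf).comp (by continuity)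
  set ψ : ℝ → ℝ := fun s => ginv f ((s - ξs) / T) with hψ
  have hψc : Continuous ψ := ginv_aff_cont hf ξs T
  have hφψ : ∀ η, z < η → η ≤ x → (∫ s in z..η, φ s) ≤ ∫ s in z..η, ψ s := by
    intro η h1 h2
    refine le_trans ?_ (hκ η h1 h2)
    apply intervalIntegral.integral_mono_on (by linarith) (hφc.intervalIntegrable _ _)
      (bdd_ii huT hbd z η)
    intro s hs
    rcases lt_or_eq_of_le (le_trans hs.2 h2) with hsx | hsx
    · exact ole_left hf hT hO hsx
    · subst hsx
      simp only [hφ]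
      rw [show deriv f (uT s) - (s - s) / T = deriv f (uT s) by simp]
      rw [ginv_deriv hf]
  have hkey : φ z ≤ ψ z := cont_le_of_int_le hzx hφc hψc hφψ
  simp only [hφ, hψ] at hkey
  have h2 : deriv f (uT x) - (x - z) / T ≤ (z - ξs) / T := by
    have := (ginv_le_iff hf).mp hkey
    rwa [deriv_ginv hf] at this
  have h3 : (deriv f (uT x) - (x - z) / T) * T ≤ ((z - ξs) / T) * T :=
    mul_le_mul_of_nonneg_right h2 hT.le
  have hTne : T ≠ 0 := ne_of_gt hT
  field_simp at h3
  linarith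

end C9
section C10
variable {f uT : ℝ → ℝ} {T xc a b : ℝ} {J : Set ℝ}

lemma seq_to_left (x : ℝ) :
    Tendsto (fun n : ℕ => x - 1 / (n + 1)) atTop (nhdsWithin x (Set.Iio x)) := by
  rw [tendsto_nhdsWithin_iff]
  constructor
  · have := tendsto_one_div_add_atTop_nhds_zero_nat (𝕜 := ℝ)
    have h2 := tendsto_const_nhds (x := x) (f := atTop (α := ℕ)) |>.sub this
    simpa using h2
  · refine Eventually.of_forall fun n => ?_
    have : (0:ℝ) < 1 / (n + 1) := by positivity
    simp only [Set.mem_Iio]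
    linarith

lemma pinned (hf : CondF f) (hT : 0 < T) (hO : Oleinik f T uT) (hlc : LeftCts uT)
    (huT : Measurable uT) (hbd : ∀ x, uT x ∈ Set.Icc a b) (hJab : J = Set.Icc a b)
    {U : ℝ → ℝ} (hU : U ∈ IIT f T uT xc J) (x : ℝ) :
    U (footpt f T uT x) = UT uT xc x - T * legendre f (deriv f (uT x)) := by
  obtain ⟨hUlip, hUd, hHL⟩ := hU
  have hq := IIT_quot hUlip (by rw [hJab] at hUd; exact hUd)
  set L := max |a| |b| with hLdef
  have hL0 : (0:ℝ) ≤ L := le_trans (abs_nonneg a) (le_max_left _ _)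
  have hLip : ∀ p q : ℝ, |U p - U q| ≤ L * |p - q| := quot_lip hq
  have hUc : Continuous U := by
    have := quot_lipschitzWith hq
    exact this.continuous
  -- minimizers
  choose ξm hξm using fun z => hopflax_min hf hT hL0 hLip z
  have hval : ∀ z, UT uT xc z = U (ξm z) + T * legendre f ((z - ξm z) / T) := by
    intro z
    rw [← hHL z]
    exact (IsLeast.csInf_eq ⟨⟨ξm z, rfl⟩, by rintro _ ⟨ζ, rfl⟩; exact hξm z ζ⟩)
  have he1 : ∀ z η, UT uT xc η ≤ U (ξm z) + T * legendre f ((η - ξm z) / T) := by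
    intro z η
    rw [← hHL η]
    exact csInf_le (hopflax_bddBelow hf hT hL0 hLip η) ⟨ξm z, rfl⟩
  have hκgen : ∀ z η, UT uT xc η - UT uT xc z ≤ ∫ s in z..η, ginv f ((s - ξm z) / T) := by
    intro z η
    have h1 := he1 z η
    have h2 := hval z
    have h3 := legendre_FTC hf hT (ξm z) z η
    linarith
  -- the approximating sequence
  set xn : ℕ → ℝ := fun n => x - 1 / (n + 1) with hxn
  have hxn_lt : ∀ n, xn n < x := by
    intro n
    have : (0:ℝ) < 1 / (n + 1) := by positivity
    simp only [hxn]
    linarith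
  have hub : ∀ n, ξm (xn n) ≤ x - T * deriv f (uT x) := by
    intro n
    apply min_ub hf hT hO huT hbd (hxn_lt n)
    intro η h1 h2
    have := hκgen (xn n) η
    rwa [UT_sub huT hbd (xn n) η] at this
  have hlb : ∀ n, xn n - T * deriv f (uT (xn n)) ≤ ξm (xn n) := by
    intro n
    have key : ginv f ((xn n - ξm (xn n)) / T) ≤ uT (xn n) := by
      apply min_lb hf hT hlc huT hbd
      intro η hη
      have h1 := hκgen (xn n) η
      rw [UT_sub huT hbd (xn n) η] at h1
      rw [show (∫ s in (xn n)..η, uT s) = -∫ s in η..(xn n), uT s from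
        intervalIntegral.integral_symm η (xn n),
        show (∫ s in (xn n)..η, ginv f ((s - ξm (xn n)) / T))
            = -∫ s in η..(xn n), ginv f ((s - ξm (xn n)) / T) from
        intervalIntegral.integral_symm η (xn n)] at h1
      linarith
    have h2 := (ginv_le_iff hf).mp key
    have h3 : (xn n - ξm (xn n)) / T * T ≤ deriv f (uT (xn n)) * T :=
      mul_le_mul_of_nonneg_right h2 hT.le
    have hTne : T ≠ 0 := ne_of_gt hT
    field_simp at h3
    linarith
  -- convergence
  have hxn_tendsto : Tendsto xn atTop (nhdsWithin x (Set.Iio x)) := seq_to_left x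
  have hxn_nhds : Tendsto xn atTop (nhds x) := hxn_tendsto.mono_right nhdsWithin_le_nhds
  have huTx : Tendsto (fun n => uT (xn n)) atTop (nhds (uT x)) := (hlc x).comp hxn_tendsto
  have hfoot : Tendsto (fun n => xn n - T * deriv f (uT (xn n))) atTop
      (nhds (x - T * deriv f (uT x))) := by
    apply hxn_nhds.sub
    exact (tendsto_const_nhds (x := T)).mul (((deriv_cont hf).tendsto _).comp huTx)
  have hξ : Tendsto (fun n => ξm (xn n)) atTop (nhds (x - T * deriv f (uT x))) :=
    tendsto_of_tendsto_of_tendsto_of_le_of_le hfoot tendsto_const_nhds hlb hub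
  -- pass to the limit in values
  have hUTc : Continuous (UT uT xc) := by
    have hqUT : ∀ y y', y ≤ y' → a * (y' - y) ≤ UT uT xc y' - UT uT xc y ∧
        UT uT xc y' - UT uT xc y ≤ b * (y' - y) := fun y y' h => UT_bounds huT hbd h
    exact (quot_lipschitzWith hqUT).continuous
  have hlim1 : Tendsto (fun n => U (ξm (xn n))) atTop (nhds (U (x - T * deriv f (uT x)))) :=
    (hUc.tendsto _).comp hξ
  have hlim2 : Tendsto (fun n => UT uT xc (xn n) - T * legendre f ((xn n - ξm (xn n)) / T))
      atTop (nhds (UT uT xc x - T * legendre f ((x - (x - T * deriv f (uT x))) / T))) := by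
    apply Tendsto.sub
    · exact (hUTc.tendsto _).comp hxn_nhds
    · apply (tendsto_const_nhds (x := T)).mul
      apply ((legendre_continuous hf).tendsto _).comp
      exact (hxn_nhds.sub hξ).div_const T
  have heqn : ∀ n, U (ξm (xn n))
      = UT uT xc (xn n) - T * legendre f ((xn n - ξm (xn n)) / T) := by
    intro n
    have := hval (xn n)
    linarith
  have hfinal : U (x - T * deriv f (uT x))
      = UT uT xc x - T * legendre f ((x - (x - T * deriv f (uT x))) / T) := by
    apply tendsto_nhds_unique hlim1
    have : (fun n => U (ξm (xn n)))
        = fun n => UT uT xc (xn n) - T * legendre f ((xn n - ξm (xn n)) / T) :=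
      funext heqn
    rwa [this]
  have harg : (x - (x - T * deriv f (uT x))) / T = deriv f (uT x) := by
    field_simp
    ring
  rw [harg] at hfinal
  exact hfinal

end C10
section C11
variable {f uT : ℝ → ℝ} {T xc a b : ℝ} {J : Set ℝ}

lemma Uflat_pinned' (hf : CondF f) (hT : 0 < T) (hO : Oleinik f T uT)
    (huT : Measurable uT) (hbd : ∀ x, uT x ∈ Set.Icc a b) (x : ℝ) :
    Uflat f T uT xc (footpt f T uT x)
      = UT uT xc x - T * legendre f (deriv f (uT x)) := by
  rw [Uflat_pinned hf hT hO huT hbd x, foot_self_arg hT]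

lemma usharp_pinned (hf : CondF f) (hT : 0 < T) (hO : Oleinik f T uT) (hlc : LeftCts uT)
    (huT : Measurable uT) (hbd : ∀ x, uT x ∈ Set.Icc a b) (hJab : J = Set.Icc a b)
    (hne : (IIT f T uT xc J).Nonempty) (x : ℝ) :
    Usharp f T uT xc J (footpt f T uT x)
      = UT uT xc x - T * legendre f (deriv f (uT x)) := by
  apply IsGreatest.csSup_eq
  constructor
  · obtain ⟨U₀, hU₀⟩ := hne
    exact ⟨U₀, hU₀, pinned hf hT hO hlc huT hbd hJab hU₀ x⟩
  · rintro v ⟨U₀, hU₀, rfl⟩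
    exact le_of_eq (pinned hf hT hO hlc huT hbd hJab hU₀ x)

lemma usharp_bddAbove (hf : CondF f) (hT : 0 < T) (hO : Oleinik f T uT) (hlc : LeftCts uT)
    (huT : Measurable uT) (hbd : ∀ x, uT x ∈ Set.Icc a b) (hJab : J = Set.Icc a b)
    (y : ℝ) : BddAbove ((fun U : ℝ → ℝ => U y) '' IIT f T uT xc J) := by
  set L := max |a| |b| with hL
  refine ⟨(UT uT xc xc - T * legendre f (deriv f (uT xc)))
    + L * |y - footpt f T uT xc|, ?_⟩
  rintro _ ⟨U₀, hU₀, rfl⟩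
  have hq := IIT_quot hU₀.1 (by rw [hJab] at hU₀; exact hU₀.2.1)
  have hlip := quot_lip hq y (footpt f T uT xc)
  have hpin := pinned hf hT hO hlc huT hbd hJab hU₀ xc
  have h1 : U₀ y - U₀ (footpt f T uT xc) ≤ L * |y - footpt f T uT xc| :=
    le_trans (le_abs_self _) hlip
  rw [hpin] at h1
  linarith

lemma hopflax_flat (hf : CondF f) (hT : 0 < T) (hO : Oleinik f T uT)
    (huT : Measurable uT) (hbd : ∀ x, uT x ∈ Set.Icc a b) (z : ℝ) :
    HopfLax f T (Uflat f T uT xc) z = UT uT xc z := by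
  have hflatq : ∀ y y', y ≤ y' → a * (y' - y) ≤ Uflat f T uT xc y' - Uflat f T uT xc y ∧
      Uflat f T uT xc y' - Uflat f T uT xc y ≤ b * (y' - y) :=
    fun y y' h => Uflat_quot hf hT huT hbd h
  have hL0 : (0:ℝ) ≤ max |a| |b| := le_trans (abs_nonneg a) (le_max_left _ _)
  have hFlatLip := quot_lip hflatq
  apply le_antisymm
  · have h1 := csInf_le (hopflax_bddBelow hf hT hL0 hFlatLip z) ⟨footpt f T uT z, rfl⟩
    have h2 := Uflat_pinned' hf hT hO huT hbd (xc := xc) z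
    have h3 : (z - footpt f T uT z) / T = deriv f (uT z) := foot_self_arg hT z
    calc HopfLax f T (Uflat f T uT xc) z
        ≤ Uflat f T uT xc (footpt f T uT z)
          + T * legendre f ((z - footpt f T uT z) / T) := h1
    _ = UT uT xc z := by rw [h2, h3]; ring
  · apply le_csInf (Set.range_nonempty _)
    rintro _ ⟨ξ, rfl⟩
    have := le_Uflat hf hT huT hbd (xc := xc) ξ z
    linarith

lemma flat_IIT (hf : CondF f) (hT : 0 < T) (hO : Oleinik f T uT)
    (huT : Measurable uT) (hbd : ∀ x, uT x ∈ Set.Icc a b) (hJab : J = Set.Icc a b) :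
    Uflat f T uT xc ∈ IIT f T uT xc J := by
  have hflatq : ∀ y y', y ≤ y' → a * (y' - y) ≤ Uflat f T uT xc y' - Uflat f T uT xc y ∧
      Uflat f T uT xc y' - Uflat f T uT xc y ≤ b * (y' - y) :=
    fun y y' h => Uflat_quot hf hT huT hbd h
  refine ⟨⟨Real.toNNReal (max |a| |b|), quot_lipschitzWith hflatq⟩, ?_, ?_⟩
  · rw [hJab]
    exact quot_deriv_mem hflatq
  · exact fun z => hopflax_flat hf hT hO huT hbd z

end C11

theorem stmt_18 (f : ℝ → ℝ) (hf : CondF f) (T : ℝ) (hT : 0 < T)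
    (J : Set ℝ) (hJne : J.Nonempty) (hJcp : IsCompact J) (hJoc : J.OrdConnected)
    (uT : ℝ → ℝ) (huT : Measurable uT)
    (hlc : LeftCts uT) (huTJ : ∀ x, uT x ∈ J) (hO : Oleinik f T uT) (xc : ℝ)
    (yc : ℝ) (hyc : yc = xc - T * deriv f (uT xc))
    (uo : ℝ → ℝ) (huo : Measurable uo) (huoJ : ∀ x, uo x ∈ J) :
    (∀ x : ℝ,
        HopfLax f T (fun z => Uflat f T uT xc yc + ∫ ξ in yc..z, uo ξ) x = UT uT xc x) ↔
      ∀ y : ℝ,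
        Uflat f T uT xc y - Uflat f T uT xc yc ≤ (∫ ξ in yc..y, uo ξ) ∧
        (∫ ξ in yc..y, uo ξ) ≤ Usharp f T uT xc J y - Usharp f T uT xc J yc := by
  -- identify J with a closed interval
  set a := sInf J with ha
  set b := sSup J with hb
  have hJab : J = Set.Icc a b := by
    apply Set.Subset.antisymm
    · intro x hx
      exact ⟨csInf_le hJcp.bddBelow hx, le_csSup hJcp.bddAbove hx⟩
    · exact hJoc.out (hJcp.sInf_mem hJne) (hJcp.sSup_mem hJne)
  have hbdT : ∀ x, uT x ∈ Set.Icc a b := fun x => hJab ▸ huTJ x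
  have hbduo : ∀ x, uo x ∈ Set.Icc a b := fun x => hJab ▸ huoJ x
  have hyc' : yc = footpt f T uT xc := by rw [hyc]; rfl
  set L := max |a| |b| with hL
  have hL0 : (0:ℝ) ≤ L := le_trans (abs_nonneg a) (le_max_left _ _)
  set Uo : ℝ → ℝ := fun z => Uflat f T uT xc yc + ∫ ξ in yc..z, uo ξ with hUodef
  have hUoUT : ∀ z, Uo z = Uflat f T uT xc yc + UT uo yc z := fun z => rfl
  have hUoq : ∀ y y', y ≤ y' → a * (y' - y) ≤ Uo y' - Uo y ∧ Uo y' - Uo y ≤ b * (y' - y) := by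
    intro y y' h
    rcases UT_bounds (xc := yc) huo hbduo h with ⟨g1, g2⟩
    rw [hUoUT y', hUoUT y]
    constructor <;> linarith
  have hUoLip : ∀ p q : ℝ, |Uo p - Uo q| ≤ L * |p - q| := quot_lip hUoq
  constructor
  · -- forward direction
    intro hHL y
    have hUo_IIT : Uo ∈ IIT f T uT xc J := by
      refine ⟨⟨Real.toNNReal L, quot_lipschitzWith hUoq⟩, ?_, hHL⟩
      rw [hJab]
      exact quot_deriv_mem hUoq
    have hne : (IIT f T uT xc J).Nonempty := ⟨Uo, hUo_IIT⟩
    have h2y : Uo y = Uflat f T uT xc yc + ∫ ξ in yc..y, uo ξ := rfl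
    constructor
    · have hbb : ∀ η, UT uT xc η ≤ Uo y + T * legendre f ((η - y) / T) := by
        intro η
        rw [← hHL η]
        exact csInf_le (hopflax_bddBelow hf hT hL0 hUoLip η) ⟨y, rfl⟩
      have h1 : Uflat f T uT xc y ≤ Uo y := by
        apply csSup_le (Set.range_nonempty _)
        rintro _ ⟨η, rfl⟩
        have := hbb η
        show UT uT xc η - T * legendre f ((η - y) / T) ≤ Uo y
        linarith
      linarith
    · have hA : Uo y ≤ Usharp f T uT xc J y :=
        le_csSup (usharp_bddAbove hf hT hO hlc huT hbdT hJab y) ⟨Uo, hUo_IIT, rfl⟩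
      have hspc := usharp_pinned hf hT hO hlc huT hbdT hJab hne xc
      rw [← hyc'] at hspc
      have hflc := Uflat_pinned' hf hT hO huT hbdT (xc := xc) xc
      rw [← hyc'] at hflc
      linarith
  · -- backward direction
    intro hineq x
    have hflat := flat_IIT (xc := xc) hf hT hO huT hbdT hJab
    have hne : (IIT f T uT xc J).Nonempty := ⟨_, hflat⟩
    have hsx := usharp_pinned hf hT hO hlc huT hbdT hJab hne x
    have hsc := usharp_pinned hf hT hO hlc huT hbdT hJab hne xc
    rw [← hyc'] at hsc
    have hflc := Uflat_pinned' hf hT hO huT hbdT (xc := xc) xc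
    rw [← hyc'] at hflc
    apply le_antisymm
    · have h1 : HopfLax f T Uo x ≤ Uo (footpt f T uT x)
          + T * legendre f ((x - footpt f T uT x) / T) :=
        csInf_le (hopflax_bddBelow hf hT hL0 hUoLip x) ⟨footpt f T uT x, rfl⟩
      have h4 : (x - footpt f T uT x) / T = deriv f (uT x) := foot_self_arg hT x
      rw [h4] at h1
      have h2 := (hineq (footpt f T uT x)).2
      have h3 : Uo (footpt f T uT x)
          = Uflat f T uT xc yc + ∫ ξ in yc..(footpt f T uT x), uo ξ := rfl
      linarith
    · apply le_csInf (Set.range_nonempty _)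
      rintro _ ⟨ξ, rfl⟩
      have h1 := (hineq ξ).1
      have h2 := le_Uflat hf hT huT hbdT (xc := xc) ξ x
      have h3 : Uo ξ = Uflat f T uT xc yc + ∫ s in yc..ξ, uo s := rfl
      show UT uT xc x ≤ Uo ξ + T * legendre f ((x - ξ) / T)
      linarith
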